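/- Let H be a Hilbert space and (T_n) a sequence of compact operators on H such that ⟨T_n f − f, f⟩ → 0 for every f ∈ H. Then a bounded set F ⊆ H is precompact if and only if sup_{f ∈ F} |⟨T_n f − f, f⟩| → 0 as n → ∞. -/

import Mathlib

open scoped InnerProductSpace

section Aux

open Filter Topology ComplexConjugate

variable {H : Type*} [NormedAddCommGroup H] [InnerProductSpace ℂ H] [CompleteSpace H]

private lemma hrk_polar (S : H →L[ℂ] H) (x y : H) :
    ⟪S x, y⟫_ℂ = (⟪S (x + y), x + y⟫_ℂ - ⟪S (x - y), x - y⟫_ℂ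
      - Complex.I * ⟪S (x + Complex.I • y), x + Complex.I • y⟫_ℂ
      + Complex.I * ⟪S (x - Complex.I • y), x - Complex.I • y⟫_ℂ) / 4 := by
  simp only [map_add, map_sub, map_smul, inner_add_left, inner_add_right,
    inner_sub_left, inner_sub_right, inner_smul_left, inner_smul_right,
    Complex.conj_I]
  ring_nf
  simp [Complex.I_sq]
  ring

/-- Bounded sequences in a Hilbert space admit weakly convergent subsequences. -/
private lemma hrk_exists_weak_subseq (f : ℕ → H) (M : ℝ) (hM : ∀ k, ‖f k‖ ≤ M) :
    ∃ φ : ℕ → ℕ, StrictMono φ ∧ ∃ x : H,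
      ∀ y : H, Tendsto (fun k => ⟪f (φ k), y⟫_ℂ) atTop (𝓝 ⟪x, y⟫_ℂ) := by
  have hM0 : 0 ≤ M := le_trans (norm_nonneg _) (hM 0)
  set v : ℕ → (ℕ → ℂ) := fun k j => ⟪f k, f j⟫_ℂ with hv
  have hS : IsCompact (Set.univ.pi fun _ : ℕ => Metric.closedBall (0:ℂ) (M*M)) :=
    isCompact_univ_pi fun _ => isCompact_closedBall _ _
  have hmem : ∀ k, v k ∈ Set.univ.pi fun _ : ℕ => Metric.closedBall (0:ℂ) (M*M) := by
    intro k
    refine Set.mem_univ_pi.2 fun j => ?_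
    simp only [Metric.mem_closedBall, dist_zero_right]
    exact le_trans (norm_inner_le_norm _ _) (mul_le_mul (hM k) (hM j) (norm_nonneg _) hM0)
  obtain ⟨ℓ, -, φ, hφ, hconv⟩ := hS.tendsto_subseq hmem
  refine ⟨φ, hφ, ?_⟩
  have hconv' : ∀ j, Tendsto (fun k => ⟪f (φ k), f j⟫_ℂ) atTop (𝓝 (ℓ j)) := by
    intro j
    have := (tendsto_pi_nhds.1 hconv) j
    simpa [hv, Function.comp] using this
  set g : ℕ → H := fun k => f (φ k) with hg
  set E := (Submodule.span ℂ (Set.range f)).topologicalClosure with hE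
  have hgE : ∀ k, g k ∈ E := fun k =>
    (Submodule.span ℂ (Set.range f)).le_topologicalClosure
      (Submodule.subset_span ⟨φ k, rfl⟩)
  have hspan : ∀ z ∈ Submodule.span ℂ (Set.range f),
      ∃ c : ℂ, Tendsto (fun k => ⟪g k, z⟫_ℂ) atTop (𝓝 c) := by
    intro z hz
    induction hz using Submodule.span_induction with
    | mem z hz => obtain ⟨j, rfl⟩ := hz; exact ⟨ℓ j, hconv' j⟩
    | zero => exact ⟨0, by simpa using tendsto_const_nhds⟩
    | add u w _ _ hu hw =>
        obtain ⟨cu, hcu⟩ := hu; obtain ⟨cw, hcw⟩ := hw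
        exact ⟨cu + cw, by simpa [inner_add_right] using hcu.add hcw⟩
    | smul a u _ hu =>
        obtain ⟨cu, hcu⟩ := hu
        exact ⟨a * cu, by simpa [inner_smul_right] using hcu.const_mul a⟩
  have hcauchy : ∀ y : H, CauchySeq (fun k => ⟪g k, y⟫_ℂ) := by
    have hclos : ∀ y ∈ E, CauchySeq (fun k => ⟪g k, y⟫_ℂ) := by
      intro y hy
      rw [Metric.cauchySeq_iff]
      intro ε hε
      have hy' : y ∈ closure (Submodule.span ℂ (Set.range f) : Set H) := hy
      obtain ⟨z, hz, hdist⟩ := Metric.mem_closure_iff.1 hy' (ε / (3 * (M + 1)))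
        (by positivity)
      obtain ⟨c, hc⟩ := hspan z hz
      obtain ⟨N, hN⟩ := Metric.cauchySeq_iff.1 hc.cauchySeq (ε / 3) (by positivity)
      refine ⟨N, fun m hm n hn => ?_⟩
      have key : ∀ k, ‖⟪g k, y⟫_ℂ - ⟪g k, z⟫_ℂ‖ ≤ ε / 3 := by
        intro k
        rw [← inner_sub_right]
        calc ‖⟪g k, y - z⟫_ℂ‖ ≤ ‖g k‖ * ‖y - z‖ := norm_inner_le_norm _ _
          _ ≤ M * (ε / (3 * (M + 1))) := by
              refine mul_le_mul (hM _) ?_ (norm_nonneg _) hM0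
              rw [← dist_eq_norm]; exact hdist.le
          _ ≤ ε / 3 := by
              rw [mul_div_assoc', div_le_div_iff₀ (by positivity) (by norm_num)]
              nlinarith
      have h1 := key m
      have h2 := key n
      have h3 := hN m hm n hn
      rw [dist_eq_norm] at h3 ⊢
      calc ‖⟪g m, y⟫_ℂ - ⟪g n, y⟫_ℂ‖
          = ‖(⟪g m, y⟫_ℂ - ⟪g m, z⟫_ℂ) + (⟪g m, z⟫_ℂ - ⟪g n, z⟫_ℂ)
              + (⟪g n, z⟫_ℂ - ⟪g n, y⟫_ℂ)‖ := by ring_nf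
        _ ≤ ‖(⟪g m, y⟫_ℂ - ⟪g m, z⟫_ℂ) + (⟪g m, z⟫_ℂ - ⟪g n, z⟫_ℂ)‖
              + ‖⟪g n, z⟫_ℂ - ⟪g n, y⟫_ℂ‖ := norm_add_le _ _
        _ ≤ ‖⟪g m, y⟫_ℂ - ⟪g m, z⟫_ℂ‖ + ‖⟪g m, z⟫_ℂ - ⟪g n, z⟫_ℂ‖
              + ‖⟪g n, z⟫_ℂ - ⟪g n, y⟫_ℂ‖ := by
            gcongr; exact norm_add_le _ _
        _ < ε := by
            have : ‖⟪g n, z⟫_ℂ - ⟪g n, y⟫_ℂ‖ ≤ ε / 3 := by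
              rw [norm_sub_rev]; exact h2
            linarith
    intro y
    haveI : CompleteSpace E :=
      (Submodule.span ℂ (Set.range f)).isClosed_topologicalClosure.completeSpace_coe
    have hdecomp : ((E.orthogonalProjectionOnto y : H) + (Eᗮ.orthogonalProjectionOnto y : H)) = y := by
      simpa only [Submodule.starProjection_apply] using
        Submodule.starProjection_add_starProjection_orthogonal (K := E) y
    have : ∀ k, ⟪g k, y⟫_ℂ = ⟪g k, (E.orthogonalProjectionOnto y : H)⟫_ℂ := by
      intro k
      conv_lhs => rw [← hdecomp]
      rw [inner_add_right,
        Submodule.inner_right_of_mem_orthogonal (hgE k)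
          (Eᗮ.orthogonalProjectionOnto y).2, add_zero]
    simp only [this]
    exact hclos _ (E.orthogonalProjectionOnto y).2
  choose c hc using fun y => cauchySeq_tendsto_of_complete (hcauchy y)
  have hlin : IsLinearMap ℂ c := by
    constructor
    · intro y z
      exact tendsto_nhds_unique (hc (y + z))
        (by simpa [inner_add_right] using (hc y).add (hc z))
    · intro a y
      exact tendsto_nhds_unique (hc (a • y))
        (by simpa [inner_smul_right] using (hc y).const_mul a)
  have hbdd : ∀ y, ‖c y‖ ≤ M * ‖y‖ := by
    intro y
    refine le_of_tendsto ((hc y).norm) (Filter.Eventually.of_forall fun k => ?_)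
    exact le_trans (norm_inner_le_norm _ _) (by gcongr; exact hM _)
  let L : H →L[ℂ] ℂ := LinearMap.mkContinuous (IsLinearMap.mk' c hlin) M hbdd
  refine ⟨(InnerProductSpace.toDual ℂ H).symm L, fun y => ?_⟩
  rw [InnerProductSpace.toDual_symm_apply]
  exact hc y

/-- A compact operator maps weakly convergent bounded sequences to norm convergent ones. -/
private lemma hrk_compact_weak_to_strong (T : H →L[ℂ] H) (hT : IsCompactOperator T)
    (g : ℕ → H) (M : ℝ) (hM : ∀ k, ‖g k‖ ≤ M) (x : H)
    (hw : ∀ y : H, Tendsto (fun k => ⟪g k, y⟫_ℂ) atTop (𝓝 ⟪x, y⟫_ℂ)) :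
    Tendsto (fun k => T (g k)) atTop (𝓝 (T x)) := by
  have hK : IsCompact (closure (T '' Metric.closedBall 0 M)) :=
    hT.isCompact_closure_image_of_bounded (Metric.isBounded_closedBall)
  have hmem : ∀ k, T (g k) ∈ closure (T '' Metric.closedBall 0 M) := fun k =>
    subset_closure ⟨g k, by simpa [Metric.mem_closedBall, dist_zero_right] using hM k, rfl⟩
  have hwT : ∀ y : H, Tendsto (fun k => ⟪T (g k), y⟫_ℂ) atTop (𝓝 ⟪T x, y⟫_ℂ) := by
    intro y
    have h1 : ∀ u : H, ⟪T u, y⟫_ℂ = ⟪u, (ContinuousLinearMap.adjoint T) y⟫_ℂ := fun u =>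
      (ContinuousLinearMap.adjoint_inner_right T u y).symm
    simp only [h1]
    exact hw _
  refine tendsto_of_subseq_tendsto fun ns hns => ?_
  obtain ⟨a, -, ms, hms, ha⟩ := hK.tendsto_subseq (fun n => hmem (ns n))
  have haTx : a = T x := by
    refine ext_inner_left ℂ fun y => ?_
    have h1 : Tendsto (fun n => ⟪y, T (g (ns (ms n)))⟫_ℂ) atTop (𝓝 ⟪y, a⟫_ℂ) :=
      (tendsto_const_nhds.inner ha : _)
    have h2 : Tendsto (fun n => ⟪T (g (ns (ms n))), y⟫_ℂ) atTop (𝓝 ⟪T x, y⟫_ℂ) :=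
      (hwT y).comp ((hns.comp hms.tendsto_atTop))
    have h2' : Tendsto (fun n => ⟪y, T (g (ns (ms n)))⟫_ℂ) atTop (𝓝 ⟪y, T x⟫_ℂ) := by
      have := (Complex.continuous_conj.tendsto _).comp h2
      simpa [Function.comp_def, inner_conj_symm] using this
    exact tendsto_nhds_unique h1 h2'
  exact ⟨ms, by rwa [haTx] at ha⟩

/-- Core of the backward implication. -/
private lemma hrk_strong_conv (T : ℕ → H →L[ℂ] H)
    (hconv : ∀ f : H, Tendsto (fun n => ⟪T n f - f, f⟫_ℂ) atTop (𝓝 0))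
    (F : Set H) (M : ℝ) (hFM : ∀ f ∈ F, ‖f‖ ≤ M)
    (hsmall : ∀ ε > 0, ∃ N : ℕ, ∀ n ≥ N, ∀ f ∈ F, ‖⟪T n f - f, f⟫_ℂ‖ < ε)
    (g : ℕ → H) (hgF : ∀ k, g k ∈ F) (x : H)
    (hw : ∀ y : H, Tendsto (fun k => ⟪g k, y⟫_ℂ) atTop (𝓝 ⟪x, y⟫_ℂ))
    (hws : ∀ n, Tendsto (fun k => T n (g k)) atTop (𝓝 (T n x))) :
    Tendsto g atTop (𝓝 x) := by
  have hgM : ∀ k, ‖g k‖ ≤ M := fun k => hFM _ (hgF k)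
  have hself : ∀ u : H, (⟪u, u⟫_ℂ).re = ‖u‖ ^ 2 := fun u => by
    simpa using inner_self_eq_norm_sq (𝕜 := ℂ) u
  have hstep4 : ∀ n, Tendsto (fun k => ⟪T n (g k), g k⟫_ℂ) atTop (𝓝 ⟪T n x, x⟫_ℂ) := by
    intro n
    have h1 : Tendsto (fun k => ⟪T n (g k) - T n x, g k⟫_ℂ) atTop (𝓝 0) := by
      rw [tendsto_zero_iff_norm_tendsto_zero]
      refine squeeze_zero (g := fun k => ‖T n (g k) - T n x‖ * M)
        (fun k => norm_nonneg _) (fun k => ?_) ?_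
      · exact le_trans (norm_inner_le_norm _ _)
          (mul_le_mul_of_nonneg_left (hgM k) (norm_nonneg _))
      · have : Tendsto (fun k => ‖T n (g k) - T n x‖) atTop (𝓝 0) := by
          rw [← tendsto_iff_norm_sub_tendsto_zero]; exact hws n
        simpa using this.mul_const M
    have h2 : Tendsto (fun k => ⟪T n x, g k⟫_ℂ) atTop (𝓝 ⟪T n x, x⟫_ℂ) := by
      have := (Complex.continuous_conj.tendsto _).comp (hw (T n x))
      simpa [Function.comp_def, inner_conj_symm] using this
    have := h1.add h2
    simpa [inner_sub_left] using this
  have hnorm : Tendsto (fun k => ‖g k‖ ^ 2) atTop (𝓝 (‖x‖ ^ 2)) := by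
    rw [Metric.tendsto_atTop]
    intro ε hε
    obtain ⟨N₁, hN₁⟩ := hsmall (ε / 4) (by positivity)
    obtain ⟨N₂, hN₂⟩ := (Metric.tendsto_atTop.1 (hconv x)) (ε / 4) (by positivity)
    set n := max N₁ N₂
    have hqx : ‖⟪T n x - x, x⟫_ℂ‖ < ε / 4 := by
      simpa [dist_eq_norm] using hN₂ n (le_max_right _ _)
    have hre : Tendsto (fun k => (⟪T n (g k), g k⟫_ℂ).re) atTop (𝓝 (⟪T n x, x⟫_ℂ).re) :=
      (Complex.continuous_re.tendsto _).comp (hstep4 n)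
    obtain ⟨K₀, hK₀⟩ := (Metric.tendsto_atTop.1 hre) (ε / 4) (by positivity)
    refine ⟨K₀, fun k hk => ?_⟩
    have e1 : ∀ u : H, ‖u‖ ^ 2 - (⟪T n u, u⟫_ℂ).re = (-⟪T n u - u, u⟫_ℂ).re := by
      intro u
      rw [← hself]
      simp [inner_sub_left]
    have b1 : |‖g k‖ ^ 2 - (⟪T n (g k), g k⟫_ℂ).re| < ε / 4 := by
      rw [e1]
      calc |(-⟪T n (g k) - g k, g k⟫_ℂ).re| ≤ ‖-⟪T n (g k) - g k, g k⟫_ℂ‖ :=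
            Complex.abs_re_le_norm _
        _ = ‖⟪T n (g k) - g k, g k⟫_ℂ‖ := norm_neg _
        _ < ε / 4 := hN₁ n (le_max_left _ _) _ (hgF k)
    have b2 : |‖x‖ ^ 2 - (⟪T n x, x⟫_ℂ).re| < ε / 4 := by
      rw [e1]
      calc |(-⟪T n x - x, x⟫_ℂ).re| ≤ ‖-⟪T n x - x, x⟫_ℂ‖ := Complex.abs_re_le_norm _
        _ = ‖⟪T n x - x, x⟫_ℂ‖ := norm_neg _
        _ < ε / 4 := hqx
    have b3 : |(⟪T n (g k), g k⟫_ℂ).re - (⟪T n x, x⟫_ℂ).re| < ε / 4 := by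
      simpa [Real.dist_eq] using hK₀ k hk
    rw [Real.dist_eq]
    have t1 := abs_sub_le (‖g k‖ ^ 2) ((⟪T n (g k), g k⟫_ℂ).re) (‖x‖ ^ 2)
    have t2 := abs_sub_le ((⟪T n (g k), g k⟫_ℂ).re) ((⟪T n x, x⟫_ℂ).re) (‖x‖ ^ 2)
    have b2' : |(⟪T n x, x⟫_ℂ).re - ‖x‖ ^ 2| < ε / 4 := by
      rw [abs_sub_comm]; exact b2
    linarith
  have hgx : Tendsto (fun k => (⟪g k, x⟫_ℂ).re) atTop (𝓝 (‖x‖ ^ 2)) := by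
    have := (Complex.continuous_re.tendsto _).comp (hw x)
    simpa only [Function.comp_def, hself] using this
  have keysq : ∀ k, ‖g k - x‖ ^ 2 = ‖g k‖ ^ 2 - 2 * (⟪g k, x⟫_ℂ).re + ‖x‖ ^ 2 := by
    intro k
    simpa using norm_sub_sq (𝕜 := ℂ) (g k) x
  have h2' : Tendsto (fun k => ‖g k‖ ^ 2 - 2 * (⟪g k, x⟫_ℂ).re + ‖x‖ ^ 2) atTop
      (𝓝 (‖x‖ ^ 2 - 2 * ‖x‖ ^ 2 + ‖x‖ ^ 2)) :=
    (hnorm.sub (hgx.const_mul 2)).add tendsto_const_nhds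
  have h2 : Tendsto (fun k => ‖g k - x‖ ^ 2) atTop (𝓝 0) := by
    simp only [keysq]
    convert h2' using 2
    ring
  have h3 : Tendsto (fun k => ‖g k - x‖) atTop (𝓝 0) := by
    have := (Real.continuous_sqrt.tendsto 0).comp h2
    simpa [Function.comp_def, Real.sqrt_sq (norm_nonneg _)] using this
  exact tendsto_iff_norm_sub_tendsto_zero.mpr h3

end Aux

/-- Hilbert space Riesz–Kolmogorov type criterion with quadratic form conditions:
if `(T n)` are compact operators on a Hilbert space `H` with `⟪T n f - f, f⟫ → 0` for each
`f`, then a bounded set `F ⊆ H` is precompact iff `sup_{f ∈ F} |⟪T n f - f, f⟫| → 0`. -/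
theorem hilbert_riesz_kolmogorov
    {H : Type*} [NormedAddCommGroup H] [InnerProductSpace ℂ H] [CompleteSpace H]
    (T : ℕ → H →L[ℂ] H) (hT : ∀ n, IsCompactOperator (T n))
    (hconv : ∀ f : H,
      Filter.Tendsto (fun n => ⟪T n f - f, f⟫_ℂ) Filter.atTop (nhds 0))
    (F : Set H) (hF : Bornology.IsBounded F) :
    IsCompact (closure F) ↔
      ∀ ε > 0, ∃ N : ℕ, ∀ n ≥ N, ∀ f ∈ F, ‖⟪T n f - f, f⟫_ℂ‖ < ε := by
  open Filter Topology in
  obtain ⟨M₀, hM₀⟩ := (Metric.isBounded_iff_subset_closedBall 0).1 hF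
  set M := max M₀ 0 with hMdef
  have hFM : ∀ f ∈ F, ‖f‖ ≤ M := fun f hf => by
    have := hM₀ hf
    simp only [Metric.mem_closedBall, dist_zero_right] at this
    exact le_trans this (le_max_left _ _)
  constructor
  · -- forward direction
    intro hK
    have hq : ∀ u : H, Filter.Tendsto (fun n => ⟪(T n - 1) u, u⟫_ℂ) Filter.atTop (𝓝 0) := by
      intro u
      simpa [ContinuousLinearMap.sub_apply] using hconv u
    have cross : ∀ x y : H,
        Filter.Tendsto (fun n => ⟪(T n - 1) x, y⟫_ℂ) Filter.atTop (𝓝 0) := by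
      intro x y
      have comb := ((((hq (x+y)).sub (hq (x-y))).sub
        ((hq (x + Complex.I • y)).const_mul Complex.I)).add
        ((hq (x - Complex.I • y)).const_mul Complex.I)).div_const 4
      have heq : (fun n => ⟪(T n - 1) x, y⟫_ℂ)
          = fun n => (⟪(T n - 1) (x + y), x + y⟫_ℂ - ⟪(T n - 1) (x - y), x - y⟫_ℂ
            - Complex.I * ⟪(T n - 1) (x + Complex.I • y), x + Complex.I • y⟫_ℂ
            + Complex.I * ⟪(T n - 1) (x - Complex.I • y), x - Complex.I • y⟫_ℂ) / 4 :=
        funext fun n => hrk_polar (T n - 1) x y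
      rw [heq]
      simpa using comb
    have hb1 : ∀ x : H, ∃ C, ∀ n, ‖(T n - 1) x‖ ≤ C := by
      intro x
      have h := banach_steinhaus (g := fun n => innerSL ℂ ((T n - 1) x)) ?_
      · obtain ⟨C, hC⟩ := h
        refine ⟨C, fun n => ?_⟩
        rw [← innerSL_apply_norm (𝕜 := ℂ)]
        exact hC n
      · intro y
        have : BddAbove (Set.range fun n => ‖⟪(T n - 1) x, y⟫_ℂ‖) :=
          (cross x y).norm.bddAbove_range
        obtain ⟨C, hC⟩ := this
        exact ⟨C, fun n => hC (Set.mem_range_self n)⟩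
    obtain ⟨C, hC⟩ := banach_steinhaus hb1
    have hC0 : 0 ≤ C := le_trans (norm_nonneg _) (hC 0)
    set B := M + 1 with hBdef
    have hB0 : 0 < B := by positivity
    intro ε hε
    have hD : (0:ℝ) < 4 * C * B + 1 := by positivity
    set δ := min 1 (ε / (4 * C * B + 1)) with hδdef
    have hδ0 : 0 < δ := lt_min_iff.2 ⟨one_pos, div_pos hε hD⟩
    obtain ⟨t, ht⟩ := hK.elim_finite_subcover (fun x : H => Metric.ball x δ)
      (fun x => Metric.isOpen_ball)
      (fun x _ => Set.mem_iUnion.2 ⟨x, Metric.mem_ball_self hδ0⟩)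
    have hev : ∀ᶠ n in Filter.atTop, ∀ i ∈ t, ‖⟪(T n - 1) i, i⟫_ℂ‖ < ε / 2 := by
      refine (Filter.eventually_all_finset t).2 fun i _ => ?_
      have h0 : Filter.Tendsto (fun n => ‖⟪(T n - 1) i, i⟫_ℂ‖) Filter.atTop (𝓝 0) := by
        simpa using (hq i).norm
      exact h0.eventually_lt_const (half_pos hε)
    obtain ⟨N, hN⟩ := Filter.eventually_atTop.1 hev
    refine ⟨N, fun n hn f hf => ?_⟩
    obtain ⟨i, hit, hfi⟩ : ∃ i ∈ t, f ∈ Metric.ball i δ := by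
      have := ht (subset_closure hf)
      simpa using this
    have hdist : ‖f - i‖ ≤ δ := by
      rw [← dist_eq_norm]; exact (Metric.mem_ball.1 hfi).le
    have hfM : ‖f‖ ≤ M := hFM f hf
    have hiB : ‖i‖ ≤ B := by
      calc ‖i‖ = ‖f - (f - i)‖ := congrArg norm (sub_sub_cancel f i).symm
        _ ≤ ‖f‖ + ‖f - i‖ := norm_sub_le _ _
        _ ≤ M + 1 := add_le_add hfM (hdist.trans (min_le_left _ _))
    have hSid : T n f - f = (T n - 1) f := by simp [ContinuousLinearMap.sub_apply]
    rw [hSid]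
    have hdecomp : ⟪(T n - 1) f, f⟫_ℂ
        = ⟪(T n - 1) (f - i), f⟫_ℂ + ⟪(T n - 1) i, f - i⟫_ℂ + ⟪(T n - 1) i, i⟫_ℂ := by
      simp only [map_sub, inner_sub_left, inner_sub_right]
      ring
    have hop : ∀ u v : H, ‖⟪(T n - 1) u, v⟫_ℂ‖ ≤ C * ‖u‖ * ‖v‖ := by
      intro u v
      calc ‖⟪(T n - 1) u, v⟫_ℂ‖ ≤ ‖(T n - 1) u‖ * ‖v‖ := norm_inner_le_norm _ _
        _ ≤ (C * ‖u‖) * ‖v‖ := by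
            have := (T n - 1).le_opNorm u
            have h2 : ‖(T n - 1) u‖ ≤ C * ‖u‖ :=
              this.trans (mul_le_mul_of_nonneg_right (hC n) (norm_nonneg _))
            exact mul_le_mul_of_nonneg_right h2 (norm_nonneg _)
    have t1 : ‖⟪(T n - 1) (f - i), f⟫_ℂ‖ ≤ C * δ * B := by
      refine (hop _ _).trans ?_
      have h1 : C * ‖f - i‖ ≤ C * δ := mul_le_mul_of_nonneg_left hdist hC0
      have h2 : ‖f‖ ≤ B := hfM.trans (by simp [hBdef])
      calc C * ‖f - i‖ * ‖f‖ ≤ C * δ * ‖f‖ := mul_le_mul_of_nonneg_right h1 (norm_nonneg _)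
        _ ≤ C * δ * B := mul_le_mul_of_nonneg_left h2 (by positivity)
    have t2 : ‖⟪(T n - 1) i, f - i⟫_ℂ‖ ≤ C * B * δ := by
      refine (hop _ _).trans ?_
      calc C * ‖i‖ * ‖f - i‖ ≤ C * B * ‖f - i‖ :=
            mul_le_mul_of_nonneg_right (mul_le_mul_of_nonneg_left hiB hC0) (norm_nonneg _)
        _ ≤ C * B * δ := mul_le_mul_of_nonneg_left hdist (by positivity)
    have t3 : ‖⟪(T n - 1) i, i⟫_ℂ‖ < ε / 2 := hN n hn i hit
    have hbound := (norm_add_le _ _).trans_lt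
      (add_lt_add_of_le_of_lt (norm_add_le _ _ |>.trans (add_le_add t1 t2)) t3)
    rw [hdecomp]
    have hδle : δ ≤ ε / (4 * C * B + 1) := min_le_right _ _
    have key : C * δ * B + C * B * δ ≤ ε / 2 := by
      have h1 : C * δ * B + C * B * δ = 2 * (C * B) * δ := by ring
      rw [h1]
      have h2 : 2 * (C * B) * δ ≤ 2 * (C * B) * (ε / (4 * C * B + 1)) :=
        mul_le_mul_of_nonneg_left hδle (by positivity)
      refine h2.trans ?_
      rw [mul_div_assoc', div_le_div_iff₀ hD (by norm_num)]
      nlinarith [mul_nonneg (mul_nonneg hC0 hB0.le) hε.le]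
    exact hbound.trans_le (by linarith)
  · -- backward direction
    intro hsmall
    rw [isCompact_iff_isSeqCompact]
    intro u hu
    have hchoice : ∀ k : ℕ, ∃ fk ∈ F, dist (u k) fk < 1 / (k + 1) := by
      intro k
      exact Metric.mem_closure_iff.1 (hu k) _ (by positivity)
    choose f hfF hfd using hchoice
    have hfM : ∀ k, ‖f k‖ ≤ M := fun k => hFM _ (hfF k)
    obtain ⟨φ, hφ, x, hw⟩ := hrk_exists_weak_subseq f M hfM
    have hws : ∀ n, Filter.Tendsto (fun k => T n (f (φ k))) Filter.atTop (𝓝 (T n x)) :=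
      fun n => hrk_compact_weak_to_strong (T n) (hT n) (fun k => f (φ k)) M
        (fun k => hfM _) x hw
    have hstrong : Filter.Tendsto (fun k => f (φ k)) Filter.atTop (𝓝 x) :=
      hrk_strong_conv T hconv F M hFM hsmall (fun k => f (φ k))
        (fun k => hfF (φ k)) x hw hws
    have hxF : x ∈ closure F :=
      mem_closure_of_tendsto hstrong (Filter.Eventually.of_forall fun k => hfF (φ k))
    refine ⟨x, hxF, φ, hφ, ?_⟩
    have hd1 : Filter.Tendsto (fun k => dist (u (φ k)) (f (φ k))) Filter.atTop (𝓝 0) := by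
      refine squeeze_zero (g := fun k : ℕ => 1 / ((k : ℝ) + 1))
        (fun k => dist_nonneg) (fun k => ?_) tendsto_one_div_add_atTop_nhds_zero_nat
      refine (hfd (φ k)).le.trans ?_
      refine one_div_le_one_div_of_le (by positivity) ?_
      have : (k : ℝ) ≤ (φ k : ℝ) := by exact_mod_cast hφ.le_apply
      linarith
    have hd2 : Filter.Tendsto (fun k => dist (f (φ k)) x) Filter.atTop (𝓝 0) :=
      (tendsto_iff_dist_tendsto_zero).1 hstrong
    rw [tendsto_iff_dist_tendsto_zero]
    refine squeeze_zero (g := fun k => dist (u (φ k)) (f (φ k)) + dist (f (φ k)) x)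
      (fun k => dist_nonneg) (fun k => dist_triangle _ _ _) ?_
    simpa using hd1.add hd2
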